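/- Let S and A be finite nonempty sets, let γ ∈ [0,1), let P : S × A → (S → ℝ) be a stochastic kernel, let R : S × A → ℝ satisfy |R(s,a)| ≤ R_max, let π* : S → (A → ℝ) assign to each state a probability distribution on A with Bellman fixed point V* (i.e. V*(s) = ∑_a π*(a|s)·(R(s,a) + γ·∑_{s'} P(s'|s,a)·V*(s'))), and let (π_n)_{n∈ℕ} be a sequence of such policies with corresponding Bellman fixed points (V_n)_{n∈ℕ}. If max_{s∈S} TV(π_n(·|s), π*(·|s)) → 0 as n → ∞, then max_{s∈S} |V_n(s) − V*(s)| → 0 as n → ∞. -/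
import Mathlib

private lemma sum_weight_mul_abs_le {ι : Type*} [Fintype ι] (w f : ι → ℝ) (K : ℝ)
    (hw : ∀ i, 0 ≤ w i) (hsum : ∑ i, w i = 1) (hf : ∀ i, |f i| ≤ K) :
    |∑ i, w i * f i| ≤ K := by
  calc |∑ i, w i * f i| ≤ ∑ i, |w i * f i| := Finset.abs_sum_le_sum_abs _ _
    _ = ∑ i, w i * |f i| := by
        refine Finset.sum_congr rfl fun i _ => ?_
        rw [abs_mul, abs_of_nonneg (hw i)]
    _ ≤ ∑ i, w i * K :=
        Finset.sum_le_sum fun i _ => mul_le_mul_of_nonneg_left (hf i) (hw i)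
    _ = K := by rw [← Finset.sum_mul, hsum, one_mul]

/-- asymptotic optimality under vanishing policy TV: if the
policies `π_n` converge to `π*` uniformly in total variation, then their
Bellman values converge uniformly to `V*`. -/
theorem value_convergence_of_policy_tv_convergence
    {S : Type*} {A : Type*} [Fintype S] [Fintype A] [Nonempty S] [Nonempty A]
    (γ : ℝ) (hγ : γ ∈ Set.Ico (0 : ℝ) 1)
    (P : S × A → S → ℝ)
    (hPnonneg : ∀ p s', 0 ≤ P p s') (hPsum : ∀ p, ∑ s', P p s' = 1)
    (R : S × A → ℝ) (Rmax : ℝ) (hR : ∀ p, |R p| ≤ Rmax)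
    (πstar : S → A → ℝ)
    (hπstarnonneg : ∀ s a, 0 ≤ πstar s a) (hπstarsum : ∀ s, ∑ a, πstar s a = 1)
    (Vstar : S → ℝ)
    (hVstar : ∀ s, Vstar s =
      ∑ a, πstar s a * (R (s, a) + γ * ∑ s', P (s, a) s' * Vstar s'))
    (π : ℕ → S → A → ℝ)
    (hπnonneg : ∀ n s a, 0 ≤ π n s a) (hπsum : ∀ n s, ∑ a, π n s a = 1)
    (V : ℕ → S → ℝ)
    (hV : ∀ n s, V n s =
      ∑ a, π n s a * (R (s, a) + γ * ∑ s', P (s, a) s' * V n s'))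
    (hTV : Filter.Tendsto
      (fun n => Finset.univ.sup' Finset.univ_nonempty
        (fun s : S => (1 / 2) * ∑ a, |π n s a - πstar s a|))
      Filter.atTop (nhds 0)) :
    Filter.Tendsto
      (fun n => Finset.univ.sup' Finset.univ_nonempty
        (fun s : S => |V n s - Vstar s|))
      Filter.atTop (nhds 0) := by
  obtain ⟨hγ0, hγ1⟩ := hγ
  obtain ⟨s0⟩ := ‹Nonempty S›
  obtain ⟨a0⟩ := ‹Nonempty A›
  have hS : (Finset.univ : Finset S).Nonempty := Finset.univ_nonempty
  have hRmax : 0 ≤ Rmax := le_trans (abs_nonneg _) (hR (s0, a0))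
  -- bound on Vstar
  set M := Finset.univ.sup' hS (fun s => |Vstar s|) with hMdef
  have hMle : ∀ s, |Vstar s| ≤ M := fun s =>
    Finset.le_sup' (fun s => |Vstar s|) (Finset.mem_univ s)
  have hM0 : 0 ≤ M := le_trans (abs_nonneg _) (hMle s0)
  -- expected-value bound over next states
  have hPW : ∀ (p : S × A) (W : S → ℝ) (B : ℝ), (∀ s, |W s| ≤ B) →
      |∑ s', P p s' * W s'| ≤ B := fun p W B hB =>
    sum_weight_mul_abs_le (P p) W B (hPnonneg p) (hPsum p) hB
  set K := Rmax + γ * M with hKdef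
  have hK0 : 0 ≤ K := by positivity
  have hQ : ∀ s a, |R (s, a) + γ * ∑ s', P (s, a) s' * Vstar s'| ≤ K := by
    intro s a
    calc |R (s, a) + γ * ∑ s', P (s, a) s' * Vstar s'|
        ≤ |R (s, a)| + |γ * ∑ s', P (s, a) s' * Vstar s'| := abs_add_le _ _
      _ ≤ Rmax + γ * M := by
          gcongr
          · exact hR _
          · rw [abs_mul, abs_of_nonneg hγ0]
            exact mul_le_mul_of_nonneg_left (hPW _ _ _ hMle) hγ0
  -- the main bound: D n ≤ (2K/(1-γ)) * T n
  set T : ℕ → ℝ := fun n => Finset.univ.sup' Finset.univ_nonempty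
      (fun s : S => (1 / 2) * ∑ a, |π n s a - πstar s a|) with hTdef
  set D : ℕ → ℝ := fun n => Finset.univ.sup' Finset.univ_nonempty
      (fun s : S => |V n s - Vstar s|) with hDdef
  have hDle : ∀ n s, |V n s - Vstar s| ≤ D n :=
    fun n s => Finset.le_sup' (fun s => |V n s - Vstar s|) (Finset.mem_univ s)
  have hD0 : ∀ n, 0 ≤ D n := fun n => le_trans (abs_nonneg _) (hDle n s0)
  have hTle : ∀ n s, (1 / 2) * ∑ a, |π n s a - πstar s a| ≤ T n :=
    fun n s => Finset.le_sup' (fun s => (1 / 2) * ∑ a, |π n s a - πstar s a|)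
      (Finset.mem_univ s)
  have hstep : ∀ n, D n ≤ 2 * K * T n + γ * D n := by
    intro n
    obtain ⟨s, -, hs⟩ := Finset.exists_mem_eq_sup' hS (fun s => |V n s - Vstar s|)
    have hDn : D n = |V n s - Vstar s| := hs
    have hid : V n s - Vstar s =
        ∑ a, ((π n s a - πstar s a) * (R (s, a) + γ * ∑ s', P (s, a) s' * Vstar s')
          + π n s a * (γ * ∑ s', P (s, a) s' * (V n s' - Vstar s'))) := by
      rw [hV n s, hVstar s, ← Finset.sum_sub_distrib]
      refine Finset.sum_congr rfl fun a _ => ?_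
      have hXY : ∑ s', P (s, a) s' * (V n s' - Vstar s') =
          (∑ s', P (s, a) s' * V n s') - ∑ s', P (s, a) s' * Vstar s' := by
        rw [← Finset.sum_sub_distrib]
        exact Finset.sum_congr rfl fun _ _ => mul_sub _ _ _
      rw [hXY]; ring
    calc D n = |∑ a, ((π n s a - πstar s a) * (R (s, a) + γ * ∑ s', P (s, a) s' * Vstar s')
          + π n s a * (γ * ∑ s', P (s, a) s' * (V n s' - Vstar s')))| := by
          rw [hDn, hid]
      _ ≤ ∑ a, |(π n s a - πstar s a) * (R (s, a) + γ * ∑ s', P (s, a) s' * Vstar s')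
          + π n s a * (γ * ∑ s', P (s, a) s' * (V n s' - Vstar s'))| :=
          Finset.abs_sum_le_sum_abs _ _
      _ ≤ ∑ a, (|π n s a - πstar s a| * K + π n s a * (γ * D n)) := by
          refine Finset.sum_le_sum fun a _ => ?_
          calc |(π n s a - πstar s a) * (R (s, a) + γ * ∑ s', P (s, a) s' * Vstar s')
              + π n s a * (γ * ∑ s', P (s, a) s' * (V n s' - Vstar s'))|
              ≤ |(π n s a - πstar s a) * (R (s, a) + γ * ∑ s', P (s, a) s' * Vstar s')|
                + |π n s a * (γ * ∑ s', P (s, a) s' * (V n s' - Vstar s'))| := abs_add_le _ _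
            _ ≤ |π n s a - πstar s a| * K + π n s a * (γ * D n) := by
                gcongr
                · rw [abs_mul]
                  exact mul_le_mul_of_nonneg_left (hQ s a) (abs_nonneg _)
                · rw [abs_mul, abs_of_nonneg (hπnonneg n s a), abs_mul,
                    abs_of_nonneg hγ0]
                  refine mul_le_mul_of_nonneg_left ?_ (hπnonneg n s a)
                  exact mul_le_mul_of_nonneg_left (hPW _ _ _ (hDle n)) hγ0
      _ = (∑ a, |π n s a - πstar s a|) * K + (∑ a, π n s a) * (γ * D n) := by
          rw [Finset.sum_add_distrib, Finset.sum_mul, Finset.sum_mul]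
      _ ≤ (2 * T n) * K + 1 * (γ * D n) := by
          have h1 : ∑ a, |π n s a - πstar s a| ≤ 2 * T n := by
            have := hTle n s; linarith
          rw [hπsum n s]
          exact add_le_add (mul_le_mul_of_nonneg_right h1 hK0) le_rfl
      _ = 2 * K * T n + γ * D n := by ring
  have hbound : ∀ n, D n ≤ (2 * K / (1 - γ)) * T n := by
    intro n
    have h := hstep n
    rw [div_mul_eq_mul_div, le_div_iff₀ (by linarith : (0:ℝ) < 1 - γ)]
    nlinarith
  have hlim : Filter.Tendsto (fun n => (2 * K / (1 - γ)) * T n)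
      Filter.atTop (nhds 0) := by
    have h := hTV.const_mul (2 * K / (1 - γ))
    rw [mul_zero] at h
    exact h
  exact squeeze_zero hD0 hbound hlim
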